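/- A topological group G is c_b-separated — that is, the diagonal subgroup Δ_G = {(g,g) | g ∈ G} of G × G satisfies c_b(Δ_G) = Δ_G — if and only if G is maximally almost periodic, i.e. n(G) = {1}. -/

import Mathlib

open Set Topology

universe u

/-- The Bohr-closure of a subset `S` of a topological group `G`: the set of `g ∈ G` such that
`f g ∈ cl(f(S))` for every continuous homomorphism `f` from `G` into a compact Hausdorff
topological group. -/
def bohrClosure (G : Type u) [Group G] [TopologicalSpace G] (S : Set G) : Set G :=
  {g : G | ∀ (K : Type u) [Group K] [TopologicalSpace K] [IsTopologicalGroup K]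
    [CompactSpace K] [T2Space K] (f : G →* K), Continuous f → f g ∈ closure (f '' S)}

/-- The von Neumann kernel `n(G)` of a topological group `G`. -/
def vonNeumannKernel (G : Type u) [Group G] [TopologicalSpace G] : Set G :=
  bohrClosure G {1}

/-- A topological group `G` is `c_b`-compact if for every topological group `Y` and every
subgroup `S` of `G × Y`, the projection `π_Y` preserves the Bohr-closure. -/
def IsCbCompact (G : Type u) [Group G] [TopologicalSpace G] [IsTopologicalGroup G] : Prop :=
  ∀ (Y : Type u) [Group Y] [TopologicalSpace Y] [IsTopologicalGroup Y] (S : Subgroup (G × Y)),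
    Prod.snd '' bohrClosure (G × Y) (S : Set (G × Y)) =
      bohrClosure Y (Prod.snd '' (S : Set (G × Y)))

/-- A topological group `G` is `c_b`-separated (the diagonal is `c_b`-closed in `G × G`)
if and only if `G` is maximally almost periodic, i.e. `n(G) = {1}`. -/
theorem bohrClosure_diagonal_eq_iff (G : Type u) [Group G] [TopologicalSpace G]
    [IsTopologicalGroup G] :
    bohrClosure (G × G) {q : G × G | q.1 = q.2} = {q : G × G | q.1 = q.2} ↔
      vonNeumannKernel G = {1} := by
  constructor
  · intro hΔ
    apply Set.eq_singleton_iff_unique_mem.mpr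
    refine ⟨fun K _ _ _ _ _ f hf => subset_closure ⟨1, rfl, rfl⟩, ?_⟩
    intro g hg
    have key : (g, (1 : G)) ∈ bohrClosure (G × G) {q : G × G | q.1 = q.2} := by
      intro K _ _ _ _ _ F hF
      have h1 : F (1, g) = 1 := by
        have hc : Continuous fun x : G => F (1, x) :=
          hF.comp (continuous_const.prodMk continuous_id)
        have := hg K ((F.comp (MonoidHom.inr G G))) hc
        simp [Set.image_singleton, closure_singleton] at this
        rw [this, show ((1 : G), (1 : G)) = (1 : G × G) from rfl, map_one]
      have h2 : F (g, (1 : G)) = F (g, g) := by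
        have : (g, (1 : G)) = (g, g) * (1, g)⁻¹ := by simp
        rw [this, map_mul, map_inv, h1]; simp
      rw [h2]
      exact subset_closure ⟨(g, g), rfl, rfl⟩
    rw [hΔ] at key
    exact (show g = 1 from key)
  · intro hn
    refine Set.Subset.antisymm ?_ (fun q hq K _ _ _ _ _ f hf => subset_closure ⟨q, hq, rfl⟩)
    rintro ⟨a, b⟩ hab
    have hmem : a * b⁻¹ ∈ vonNeumannKernel G := by
      intro K _ _ _ _ _ f hf
      have hF : Continuous (f.prodMap f) := hf.prodMap hf
      have := hab (K × K) (f.prodMap f) hF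
      have hsub : (f.prodMap f) '' {q : G × G | q.1 = q.2} ⊆ {p : K × K | p.1 = p.2} := by
        rintro _ ⟨⟨x, y⟩, hxy, rfl⟩
        simpa using congrArg f hxy
      have hcl : closure ((f.prodMap f) '' {q : G × G | q.1 = q.2}) ⊆
          {p : K × K | p.1 = p.2} :=
        closure_minimal hsub (isClosed_eq continuous_fst continuous_snd)
      have hfab : f a = f b := hcl this
      have : f (a * b⁻¹) = 1 := by rw [map_mul, map_inv, hfab]; simp
      rw [this]
      exact subset_closure ⟨1, rfl, map_one f⟩
    rw [hn] at hmem
    have : a * b⁻¹ = 1 := hmem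
    exact mul_inv_eq_one.mp this
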